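/- Let (Y_j)_{j≥1} be a sequence of independent random variables on a probability space, each uniformly distributed on [−1/2, 1/2], and let (a_j)_{j≥1} be a real sequence with ∑_{j≥1} |a_j| < ∞. Then the fourth moment of the almost surely absolutely convergent random series Z := ∑_{j≥1} (1/√6) sin(2π Y_j) a_j satisfies E[Z⁴] = (1/96) ∑_{j≥1} a_j⁴ + (1/24) ∑_{j≥1} ∑_{k≥j+1} a_j² a_k². -/

import Mathlib

open MeasureTheory ProbabilityTheory Real Filter Topology

lemma aux_integrable {Ω : Type*} [MeasurableSpace Ω] (P : Measure Ω) [IsProbabilityMeasure P]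
    {f : Ω → ℝ} (hf : AEStronglyMeasurable f P) {C : ℝ} (h : ∀ ω, |f ω| ≤ C) :
    Integrable f P :=
  (integrable_const C).mono' hf (Filter.Eventually.of_forall (by simpa [Real.norm_eq_abs] using h))

lemma aux_sin_int (m : ℕ) :
    ∫ y in Set.Icc (-(1/2):ℝ) (1/2), Real.sin (2*π*y)^m
      = (2*π)⁻¹ * ∫ x in (-π)..π, Real.sin x ^ m := by
  rw [MeasureTheory.integral_Icc_eq_integral_Ioc,
      ← intervalIntegral.integral_of_le (by norm_num : (-(1/2):ℝ) ≤ 1/2)]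
  have h2π : (2*π) ≠ 0 := by positivity
  have h := intervalIntegral.integral_comp_mul_left (a := -(1/2)) (b := 1/2)
    (fun x => Real.sin x ^ m) h2π
  have e1 : 2*π*(-(1/2):ℝ) = -π := by ring
  have e2 : 2*π*((1/2):ℝ) = π := by ring
  rw [e1, e2, smul_eq_mul] at h
  exact h

lemma aux_I1 : ∫ x in (-π:ℝ)..π, Real.sin x ^ 1 = 0 := by
  simp [Real.cos_pi]

lemma aux_I2 : ∫ x in (-π:ℝ)..π, Real.sin x ^ 2 = π := by
  rw [integral_sin_sq]
  simp [Real.sin_pi]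

lemma aux_I3 : ∫ x in (-π:ℝ)..π, Real.sin x ^ 3 = 0 := by
  have h := integral_sin_pow (a := (-π:ℝ)) (b := π) 1
  norm_num [Real.sin_pi] at h
  simpa using h

lemma aux_I4 : ∫ x in (-π:ℝ)..π, Real.sin x ^ 4 = 3*π/4 := by
  have h := integral_sin_pow (a := (-π:ℝ)) (b := π) 2
  norm_num [Real.sin_pi, aux_I2] at h
  rw [show (4:ℕ) = 2+2 from rfl, h]
  ring

lemma aux_mom {Ω : Type*} [MeasurableSpace Ω] (P : Measure Ω) [IsProbabilityMeasure P]
    (Y : Ω → ℝ) (hY : Measurable Y)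
    (hYu : Measure.map Y P = volume.restrict (Set.Icc (-(1/2):ℝ) (1/2)))
    (c b : ℝ) (m : ℕ) :
    ∫ ω, (c * Real.sin (2*π*Y ω) * b)^m ∂P
      = (c*b)^m * ((2*π)⁻¹ * ∫ x in (-π)..π, Real.sin x ^ m) := by
  have hcont : Continuous (fun y : ℝ => (c * Real.sin (2*π*y) * b)^m) := by fun_prop
  calc ∫ ω, (c * Real.sin (2*π*Y ω) * b)^m ∂P
      = ∫ y, (c * Real.sin (2*π*y) * b)^m ∂(Measure.map Y P) :=
        (integral_map hY.aemeasurable hcont.aestronglyMeasurable).symm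
    _ = ∫ y in Set.Icc (-(1/2):ℝ) (1/2), (c * Real.sin (2*π*y) * b)^m := by rw [hYu]
    _ = ∫ y in Set.Icc (-(1/2):ℝ) (1/2), (c*b)^m * Real.sin (2*π*y)^m := by
        apply integral_congr_ae
        filter_upwards with y
        ring
    _ = (c*b)^m * ∫ y in Set.Icc (-(1/2):ℝ) (1/2), Real.sin (2*π*y)^m :=
        integral_const_mul _ _
    _ = _ := by rw [aux_sin_int]

lemma aux_binom {Ω : Type*} [MeasurableSpace Ω] (P : Measure Ω) [IsProbabilityMeasure P]
    {S X : Ω → ℝ} (hS : Measurable S) (hX : Measurable X) {CS CX : ℝ}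
    (hbS : ∀ ω, |S ω| ≤ CS) (hbX : ∀ ω, |X ω| ≤ CX)
    (hind : IndepFun S X P) (n : ℕ) :
    ∫ ω, (S ω + X ω)^n ∂P
      = ∑ k ∈ Finset.range (n+1),
          (n.choose k : ℝ) * (∫ ω, S ω ^ k ∂P) * (∫ ω, X ω ^ (n-k) ∂P) := by
  have hint : ∀ p q : ℕ, Integrable (fun ω => S ω ^ p * X ω ^ q) P := by
    intro p q
    refine aux_integrable P (((hS.pow_const p).mul (hX.pow_const q)).aestronglyMeasurable)
      (C := CS^p * CX^q) ?_
    intro ω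
    rw [abs_mul, abs_pow, abs_pow]
    have h1 : |S ω| ^ p ≤ CS ^ p := pow_le_pow_left₀ (abs_nonneg _) (hbS ω) p
    have h2 : |X ω| ^ q ≤ CX ^ q := pow_le_pow_left₀ (abs_nonneg _) (hbX ω) q
    exact mul_le_mul h1 h2 (pow_nonneg (abs_nonneg _) _) (pow_nonneg ((abs_nonneg _).trans (hbS ω)) _)
  calc ∫ ω, (S ω + X ω)^n ∂P
      = ∫ ω, ∑ k ∈ Finset.range (n+1), S ω ^ k * X ω ^ (n-k) * (n.choose k : ℝ) ∂P := by
        apply integral_congr_ae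
        filter_upwards with ω
        exact add_pow _ _ n
    _ = ∑ k ∈ Finset.range (n+1), ∫ ω, S ω ^ k * X ω ^ (n-k) * (n.choose k : ℝ) ∂P :=
        integral_finset_sum _ (fun k _ => (hint k (n-k)).mul_const _)
    _ = _ := by
        refine Finset.sum_congr rfl fun k _ => ?_
        have h2 : IndepFun (fun ω => S ω ^ k) (fun ω => X ω ^ (n-k)) P :=
          hind.comp (measurable_id.pow_const k) (measurable_id.pow_const (n-k))
        rw [MeasureTheory.integral_mul_const]
        rw [h2.integral_fun_mul_eq_mul_integral ((hS.pow_const k).aestronglyMeasurable)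
          ((hX.pow_const (n-k)).aestronglyMeasurable)]
        ring

theorem stmt_5
    {Ω : Type*} [MeasurableSpace Ω] (P : Measure Ω) [IsProbabilityMeasure P]
    (Y : ℕ → Ω → ℝ) (hYmeas : ∀ j, Measurable (Y j))
    (hYindep : iIndepFun Y P)
    (hYunif : ∀ j, Measure.map (Y j) P = volume.restrict (Set.Icc (-(1/2) : ℝ) (1/2)))
    (a : ℕ → ℝ) (ha : Summable fun j => |a j|) :
    (∀ᵐ ω ∂P, Summable (fun j => |(1 / Real.sqrt 6) * Real.sin (2 * π * Y j ω) * a j|)) ∧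
    ∫ ω, (∑' j, (1 / Real.sqrt 6) * Real.sin (2 * π * Y j ω) * a j) ^ 4 ∂P
      = (1 / 96) * ∑' j, (a j) ^ 4
        + (1 / 24) * ∑' j, ∑' k, (if j < k then (a j) ^ 2 * (a k) ^ 2 else 0) := by
  set c : ℝ := 1 / Real.sqrt 6 with hc
  set X : ℕ → Ω → ℝ := fun j ω => c * Real.sin (2 * π * Y j ω) * a j with hX
  have hc0 : 0 ≤ c := by positivity
  have hc2 : c ^ 2 = 1/6 := by
    rw [hc, div_pow, one_pow, Real.sq_sqrt (by norm_num : (6:ℝ) ≥ 0)]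
  have hXmeas : ∀ j, Measurable (X j) := by
    intro j
    apply Measurable.mul _ measurable_const
    exact measurable_const.mul (((measurable_const.mul (hYmeas j))).sin)
  have hXbd : ∀ j ω, |X j ω| ≤ c * |a j| := by
    intro j ω
    rw [hX]
    simp only
    rw [abs_mul, abs_mul, abs_of_nonneg hc0]
    have : |Real.sin (2 * π * Y j ω)| ≤ 1 := Real.abs_sin_le_one _
    calc c * |Real.sin (2 * π * Y j ω)| * |a j| ≤ c * 1 * |a j| := by
          apply mul_le_mul_of_nonneg_right _ (abs_nonneg _)
          exact mul_le_mul_of_nonneg_left this hc0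
      _ = c * |a j| := by ring
  have hXindep : iIndepFun X P := by
    have := hYindep.comp (fun j y => c * Real.sin (2 * π * y) * a j)
      (fun j => by fun_prop)
    exact this
  -- moments
  have hm : ∀ (j : ℕ) (m : ℕ), ∫ ω, X j ω ^ m ∂P
      = (c * a j)^m * ((2*π)⁻¹ * ∫ x in (-π)..π, Real.sin x ^ m) := by
    intro j m
    rw [hX]
    exact aux_mom P (Y j) (hYmeas j) (hYunif j) c (a j) m
  have hπ : (π:ℝ) ≠ 0 := Real.pi_ne_zero
  have hm1 : ∀ j, ∫ ω, X j ω ^ 1 ∂P = 0 := by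
    intro j; rw [hm j 1, aux_I1]; ring
  have hm1' : ∀ j, ∫ ω, X j ω ∂P = 0 := by
    intro j; have := hm1 j; simpa using this
  have hm2 : ∀ j, ∫ ω, X j ω ^ 2 ∂P = (a j)^2 / 12 := by
    intro j; rw [hm j 2, aux_I2, mul_pow, hc2]
    field_simp
    ring
  have hm3 : ∀ j, ∫ ω, X j ω ^ 3 ∂P = 0 := by
    intro j; rw [hm j 3, aux_I3]; ring
  have hm4 : ∀ j, ∫ ω, X j ω ^ 4 ∂P = (a j)^4 / 96 := by
    intro j
    rw [hm j 4, aux_I4, mul_pow]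
    have : c ^ 4 = 1/36 := by
      rw [show (4:ℕ) = 2*2 from rfl, pow_mul, hc2]; norm_num
    rw [this]
    field_simp
    ring
  have hm0 : ∀ j, ∫ ω, X j ω ^ 0 ∂P = 1 := by
    intro j; simp
  -- uniform bound
  set A : ℝ := ∑' j, |a j| with hA
  set B : ℝ := c * A with hB
  have hSbd : ∀ (N : ℕ) (ω : Ω), |∑ j ∈ Finset.range N, X j ω| ≤ B := by
    intro N ω
    calc |∑ j ∈ Finset.range N, X j ω| ≤ ∑ j ∈ Finset.range N, |X j ω| :=
          Finset.abs_sum_le_sum_abs _ _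
      _ ≤ ∑ j ∈ Finset.range N, c * |a j| := Finset.sum_le_sum fun j _ => hXbd j ω
      _ ≤ ∑' j, c * |a j| :=
          Summable.sum_le_tsum _ (fun i _ => by positivity) (ha.mul_left c)
      _ = B := by rw [tsum_mul_left]
  have hSmeas : ∀ N : ℕ, Measurable (fun ω => ∑ j ∈ Finset.range N, X j ω) :=
    fun N => Finset.measurable_sum _ (fun j _ => hXmeas j)
  -- key finite computation
  have key : ∀ N : ℕ,
      (∫ ω, (∑ j ∈ Finset.range N, X j ω) ∂P = 0) ∧
      (∫ ω, (∑ j ∈ Finset.range N, X j ω)^2 ∂P = (1/12) * ∑ j ∈ Finset.range N, (a j)^2) ∧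
      (∫ ω, (∑ j ∈ Finset.range N, X j ω)^3 ∂P = 0) ∧
      (∫ ω, (∑ j ∈ Finset.range N, X j ω)^4 ∂P
        = (1/96) * ∑ j ∈ Finset.range N, (a j)^4
          + (1/24) * ∑ j ∈ Finset.range N, ∑ k ∈ Finset.range N,
              (if j < k then (a j)^2 * (a k)^2 else 0)) := by
    intro N
    induction N with
    | zero => simp
    | succ N ih =>
      obtain ⟨ih1, ih2, ih3, ih4⟩ := ih
      have hind : IndepFun (fun ω => ∑ j ∈ Finset.range N, X j ω) (X N) P := by
        have h := hXindep.indepFun_sum_range_succ hXmeas N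
        have e : (∑ j ∈ Finset.range N, X j) = fun ω => ∑ j ∈ Finset.range N, X j ω := by
          funext ω; simp
        rwa [e] at h
      have hbX : ∀ ω, |X N ω| ≤ c * |a N| := hXbd N
      have hbin := fun n => aux_binom P (hSmeas N) (hXmeas N) (hSbd N) hbX hind n
      have e1 : ∫ ω, (∑ j ∈ Finset.range (N+1), X j ω) ∂P = 0 := by
        simp_rw [Finset.sum_range_succ]
        have h := hbin 1
        norm_num [Finset.sum_range_succ, hm0, hm1', ih1] at h
        simpa using h
      have e2 : ∫ ω, (∑ j ∈ Finset.range (N+1), X j ω)^2 ∂P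
          = (1/12) * ∑ j ∈ Finset.range (N+1), (a j)^2 := by
        simp_rw [Finset.sum_range_succ]
        rw [hbin 2]
        norm_num [Finset.sum_range_succ, hm0, hm1, hm2, ih1, ih2, pow_one]
        ring
      have e3 : ∫ ω, (∑ j ∈ Finset.range (N+1), X j ω)^3 ∂P = 0 := by
        simp_rw [Finset.sum_range_succ]
        rw [hbin 3]
        norm_num [Finset.sum_range_succ, hm0, hm1, hm2, hm3, ih1, ih2, ih3, pow_one]
        exact Or.inr (hm1' N)
      have hdouble :
          ∑ j ∈ Finset.range (N+1), ∑ k ∈ Finset.range (N+1),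
              (if j < k then (a j)^2 * (a k)^2 else 0)
            = (∑ j ∈ Finset.range N, ∑ k ∈ Finset.range N,
                (if j < k then (a j)^2 * (a k)^2 else 0))
              + ∑ j ∈ Finset.range N, (a j)^2 * (a N)^2 := by
        rw [Finset.sum_range_succ]
        simp only [Finset.sum_range_succ]
        rw [Finset.sum_add_distrib]
        have z1 : ∑ k ∈ Finset.range N, (if N < k then (a N)^2 * (a k)^2 else 0) = 0 :=
          Finset.sum_eq_zero fun k hk => if_neg (by
            have := Finset.mem_range.mp hk; omega)
        have z2 : (if N < N then (a N)^2 * (a N)^2 else 0) = 0 := if_neg (lt_irrefl N)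
        have z3 : ∑ j ∈ Finset.range N, (if j < N then (a j)^2 * (a N)^2 else 0)
            = ∑ j ∈ Finset.range N, (a j)^2 * (a N)^2 :=
          Finset.sum_congr rfl fun j hj => if_pos (Finset.mem_range.mp hj)
        rw [z1, z2, z3]
        ring
      have e4 : ∫ ω, (∑ j ∈ Finset.range (N+1), X j ω)^4 ∂P
          = (1/96) * ∑ j ∈ Finset.range (N+1), (a j)^4
            + (1/24) * ∑ j ∈ Finset.range (N+1), ∑ k ∈ Finset.range (N+1),
                (if j < k then (a j)^2 * (a k)^2 else 0) := by
        rw [hdouble]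
        conv_lhs => rw [show Finset.range (N+1) = Finset.range (N+1) from rfl]
        simp_rw [Finset.sum_range_succ]
        rw [hbin 4]
        norm_num [Finset.sum_range_succ, hm0, hm1, hm2, hm3, hm4, ih1, ih2, ih3, ih4, pow_one]
        have hch : Nat.choose 4 2 = 6 := by decide
        rw [hch]
        rw [show ((6 : ℕ) : ℝ) = 6 from by norm_num]
        have hms : ∑ j ∈ Finset.range N, a j ^ 2 * a N ^ 2
            = (∑ j ∈ Finset.range N, a j ^ 2) * a N ^ 2 := (Finset.sum_mul _ _ _).symm
        rw [hms]
        ring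
      exact ⟨e1, e2, e3, e4⟩
  -- summability facts
  have hXabs : ∀ ω, Summable (fun j => |X j ω|) := by
    intro ω
    exact Summable.of_nonneg_of_le (fun j => abs_nonneg _) (fun j => hXbd j ω) (ha.mul_left c)
  refine ⟨Filter.Eventually.of_forall hXabs, ?_⟩
  have hXsum : ∀ ω, Summable (fun j => X j ω) := fun ω => (hXabs ω).of_abs
  have htend : ∀ ω, Tendsto (fun N => ∑ j ∈ Finset.range N, X j ω) atTop
      (𝓝 (∑' j, X j ω)) := fun ω => (hXsum ω).hasSum.tendsto_sum_nat
  have hlim1 : Tendsto (fun N => ∫ ω, (∑ j ∈ Finset.range N, X j ω)^4 ∂P) atTop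
      (𝓝 (∫ ω, (∑' j, X j ω)^4 ∂P)) := by
    apply tendsto_integral_of_dominated_convergence (fun _ => B^4)
    · intro n
      exact ((hSmeas n).pow_const 4).aestronglyMeasurable
    · exact integrable_const _
    · intro n
      refine Filter.Eventually.of_forall fun ω => ?_
      rw [Real.norm_eq_abs, abs_pow]
      exact pow_le_pow_left₀ (abs_nonneg _) (hSbd n ω) 4
    · exact Filter.Eventually.of_forall fun ω => (htend ω).pow 4
  -- limits of RHS
  have hAle : ∀ j, |a j| ≤ A := fun j => Summable.le_tsum ha j (fun _ _ => abs_nonneg _)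
  have ha2 : Summable (fun j => (a j)^2) := by
    apply Summable.of_nonneg_of_le (fun j => sq_nonneg _) _ (ha.mul_left A)
    intro j
    calc (a j)^2 = |a j| * |a j| := by rw [← abs_mul, abs_mul_self]; ring
      _ ≤ A * |a j| := mul_le_mul_of_nonneg_right (hAle j) (abs_nonneg _)
  have ha4 : Summable (fun j => (a j)^4) := by
    apply Summable.of_nonneg_of_le (fun j => by positivity) _ (ha2.mul_left (A^2))
    intro j
    have h1 : (a j)^2 ≤ A^2 := by
      rw [← sq_abs]
      exact pow_le_pow_left₀ (abs_nonneg _) (hAle j) 2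
    calc (a j)^4 = (a j)^2 * (a j)^2 := by ring
      _ ≤ A^2 * (a j)^2 := mul_le_mul_of_nonneg_right h1 (sq_nonneg _)
  set bb : ℕ × ℕ → ℝ := fun p => if p.1 < p.2 then (a p.1)^2 * (a p.2)^2 else 0 with hbb
  have hbbnn : ∀ p, 0 ≤ bb p := by
    intro p; rw [hbb]; dsimp only; split_ifs <;> positivity
  have hbsum : Summable bb := by
    apply Summable.of_nonneg_of_le hbbnn _ (ha2.mul_of_nonneg ha2 (fun j => sq_nonneg _)
      (fun j => sq_nonneg _))
    intro p
    rw [hbb]; dsimp only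
    split_ifs
    · exact le_refl _
    · positivity
  have hfib : ∀ j : ℕ, Summable (fun k => bb (j, k)) := by
    intro j
    apply Summable.of_nonneg_of_le (fun k => hbbnn _) _ (ha2.mul_left ((a j)^2))
    intro k
    rw [hbb]; dsimp only
    split_ifs
    · exact le_refl _
    · positivity
  have htprod : ∑' p, bb p = ∑' j, ∑' k, (if j < k then (a j)^2 * (a k)^2 else 0) := by
    rw [Summable.tsum_prod' hbsum hfib]
  have hu : Tendsto (fun N => Finset.range N ×ˢ Finset.range N) atTop atTop := by
    apply tendsto_atTop_finset_of_monotone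
    · intro M N h
      exact Finset.product_subset_product (Finset.range_subset_range.2 h) (Finset.range_subset_range.2 h)
    · intro p
      refine ⟨max p.1 p.2 + 1, ?_⟩
      simp only [Finset.mem_product, Finset.mem_range]
      omega
  have hd : Tendsto (fun N => ∑ j ∈ Finset.range N, ∑ k ∈ Finset.range N,
      (if j < k then (a j)^2 * (a k)^2 else 0)) atTop
      (𝓝 (∑' j, ∑' k, (if j < k then (a j)^2 * (a k)^2 else 0))) := by
    rw [← htprod]
    have h := hbsum.hasSum.comp hu
    refine h.congr fun N => ?_
    simp only [Function.comp_apply]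
    rw [Finset.sum_product]
  have hlim2 : Tendsto (fun N => (1/96) * ∑ j ∈ Finset.range N, (a j)^4
      + (1/24) * ∑ j ∈ Finset.range N, ∑ k ∈ Finset.range N,
          (if j < k then (a j)^2 * (a k)^2 else 0)) atTop
      (𝓝 ((1 / 96) * ∑' j, (a j) ^ 4
        + (1 / 24) * ∑' j, ∑' k, (if j < k then (a j) ^ 2 * (a k) ^ 2 else 0))) := by
    exact ((ha4.hasSum.tendsto_sum_nat.const_mul _).add (hd.const_mul _))
  have hlim1' := hlim1.congr (fun N => (key N).2.2.2)
  exact tendsto_nhds_unique hlim1' hlim2
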